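/- arXiv:1402.3408 — 6 statements merged into one kernel-verified Lean document; each statement's English description precedes it below -/
import Mathlib

section
/- In a generalized group, every element has a unique inverse. -/
universe u v

structure GenGroup (T : Type u) where
  mul : T → T → T
  mul_assoc : ∀ a b c : T, mul (mul a b) c = mul a (mul b c)
  e : T → T
  mul_e : ∀ t, mul t (e t) = t
  e_mul : ∀ t, mul (e t) t = t
  e_unique : ∀ t u : T, mul t u = t → mul u t = t → u = e t
  inv : T → T
  mul_inv : ∀ t, mul t (inv t) = e t
  inv_mul : ∀ t, mul (inv t) t = e t

lemma e_e_eq {T : Type u} (G : GenGroup T) (t : T) : G.e (G.e t) = G.e t := by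
  have hid : G.mul (G.e t) (G.e t) = G.e t := by
    calc G.mul (G.e t) (G.e t)
        = G.mul (G.mul (G.inv t) t) (G.mul t (G.inv t)) := by
          rw [G.inv_mul, G.mul_inv]
      _ = G.mul (G.inv t) (G.mul t (G.mul t (G.inv t))) := G.mul_assoc ..
      _ = G.mul (G.inv t) (G.mul t (G.e t)) := by rw [G.mul_inv]
      _ = G.mul (G.inv t) t := by rw [G.mul_e]
      _ = G.e t := G.inv_mul t
  exact (G.e_unique (G.e t) (G.e t) hid hid).symm

lemma e_inv_eq {T : Type u} (G : GenGroup T) (t s : T)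
    (h1 : G.mul s t = G.e t) (h2 : G.mul t s = G.e t) : G.e s = G.e t := by
  have ha : G.mul (G.e t) (G.e s) = G.e t := by
    rw [← h2, G.mul_assoc, G.mul_e]
  have hb : G.mul (G.e s) (G.e t) = G.e t := by
    rw [← h1, ← G.mul_assoc, G.e_mul]
  have := G.e_unique (G.e t) (G.e s) ha hb
  rw [this, e_e_eq]

theorem unique_inverse {T : Type u} (G : GenGroup T) (t : T) :
    ∃! s : T, G.mul s t = G.e t ∧ G.mul t s = G.e t := by
  refine ⟨G.inv t, ⟨G.inv_mul t, G.mul_inv t⟩, ?_⟩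
  rintro s ⟨h1, h2⟩
  have hes : G.e s = G.e t := e_inv_eq G t s h1 h2
  calc s = G.mul s (G.e s) := (G.mul_e s).symm
    _ = G.mul s (G.mul t (G.inv t)) := by rw [hes, G.mul_inv]
    _ = G.mul (G.mul s t) (G.inv t) := (G.mul_assoc ..).symm
    _ = G.mul (G.e t) (G.inv t) := by rw [h1]
    _ = G.mul (G.e (G.inv t)) (G.inv t) := by
        rw [e_inv_eq G t (G.inv t) (G.inv_mul t) (G.mul_inv t)]
    _ = G.inv t := G.e_mul _
end

section
/- In a generalized group satisfying e(s·t) = e(s)·e(t) for all s, t, one has e(s)·e(t)·e(s) = e(s) for all s, t. -/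
universe u v

theorem e_sq {T : Type u} (G : GenGroup T) (s : T) :
    G.mul (G.e s) (G.e s) = G.e s := by
  have h1 : G.mul s (G.mul (G.e s) (G.e s)) = s := by
    rw [← G.mul_assoc, G.mul_e, G.mul_e]
  have h2 : G.mul (G.mul (G.e s) (G.e s)) s = s := by
    rw [G.mul_assoc, G.e_mul, G.e_mul]
  have := G.e_unique s _ h1 h2
  rw [this]

theorem e_idem {T : Type u} (G : GenGroup T) (x : T) :
    G.e (G.e x) = G.e x := by
  exact (G.e_unique (G.e x) (G.e x) (e_sq G x) (e_sq G x)).symm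

theorem e_sandwich {T : Type u} (G : GenGroup T)
    (he : ∀ s t : T, G.e (G.mul s t) = G.mul (G.e s) (G.e t)) (s t : T) :
    G.mul (G.mul (G.e s) (G.e t)) (G.e s) = G.e s := by
  set a := G.e s with ha
  set b := G.e t with hb
  set v := G.mul (G.mul a b) a with hv
  have hvim : G.e (G.mul s (G.mul t s)) = v := by
    rw [he, he, ← G.mul_assoc, hv, ha, hb]
  have hev : G.e v = v := by
    rw [← hvim, e_idem]
  have h1 : G.mul v a = v := by
    rw [hv, G.mul_assoc (G.mul a b) a a]
    rw [show G.mul a a = a from e_sq G s]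
  have h2 : G.mul a v = v := by
    rw [hv, ← G.mul_assoc a (G.mul a b) a, ← G.mul_assoc a a b]
    rw [show G.mul a a = a from e_sq G s]
  have := G.e_unique v a h1 h2
  rw [hv] at this
  rw [this, ← hv, hev]
end

section
/- In a generalized group satisfying e(s·t) = e(s)·e(t) for all s, t, the inverse of a product satisfies (s·t)⁻¹ = e(s)·t⁻¹·s⁻¹·e(t). -/
universe u v

namespace GenGroupAux

variable {T : Type u} (G : GenGroup T)

/-- idempotents are their own e -/
lemma e_of_idem (x : T) (h : G.mul x x = x) : G.e x = x :=
  (G.e_unique x x h h).symm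

/-- e a is idempotent -/
lemma ee (a : T) : G.mul (G.e a) (G.e a) = G.e a := by
  have h : G.mul (G.e a) (G.mul a (G.inv a)) = G.e a := by
    rw [← G.mul_assoc, G.e_mul, G.mul_inv]
  rw [G.mul_inv] at h
  exact h

lemma e_e (a : T) : G.e (G.e a) = G.e a :=
  e_of_idem G _ (ee G a)

lemma e_inv (he : ∀ s t : T, G.e (G.mul s t) = G.mul (G.e s) (G.e t)) (a : T) :
    G.e (G.inv a) = G.e a := by
  have h1 : G.mul (G.e a) (G.e (G.inv a)) = G.e a := by
    rw [← he a (G.inv a), G.mul_inv, e_e]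
  have h2 : G.mul (G.e (G.inv a)) (G.e a) = G.e a := by
    rw [← he (G.inv a) a, G.inv_mul, e_e]
  have h3 := G.e_unique (G.e a) (G.e (G.inv a)) h1 h2
  rw [h3, e_e]

lemma inv_e (he : ∀ s t : T, G.e (G.mul s t) = G.mul (G.e s) (G.e t)) (a : T) :
    G.mul (G.inv a) (G.e a) = G.inv a := by
  rw [← e_inv G he a, G.mul_e]

/-- sandwich: e s * e t * e s = e s -/
lemma sandwich (he : ∀ s t : T, G.e (G.mul s t) = G.mul (G.e s) (G.e t)) (s t : T) :
    G.mul (G.mul (G.e s) (G.e t)) (G.e s) = G.e s := by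
  set f := G.e s with hf
  set g := G.e t with hg
  have hcf : G.mul (G.mul (G.mul f g) f) f = G.mul (G.mul f g) f := by
    rw [G.mul_assoc (G.mul f g) f f, hf, ee]
  have hfc : G.mul f (G.mul (G.mul f g) f) = G.mul (G.mul f g) f := by
    rw [← G.mul_assoc f (G.mul f g) f, ← G.mul_assoc f f g, hf, ee]
  have hec : G.e (G.mul (G.mul f g) f) = G.mul (G.mul f g) f := by
    rw [he (G.mul f g) f, he f g, hf, hg]
    simp only [e_e]
  have h := G.e_unique (G.mul (G.mul f g) f) f hcf hfc
  exact (h.trans hec).symm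

/-- conjugation: (a * e x) * a⁻¹ = e a -/
lemma conj (he : ∀ s t : T, G.e (G.mul s t) = G.mul (G.e s) (G.e t)) (a x : T) :
    G.mul (G.mul a (G.e x)) (G.inv a) = G.e a := by
  set f := G.e x with hfx
  set r := G.mul (G.mul a f) (G.inv a) with hr
  have hidem : G.mul r r = r := by
    rw [hr]
    rw [G.mul_assoc (G.mul a f) (G.inv a) (G.mul (G.mul a f) (G.inv a))]
    rw [← G.mul_assoc (G.inv a) (G.mul a f) (G.inv a)]
    rw [← G.mul_assoc (G.inv a) a f, G.inv_mul]
    rw [G.mul_assoc a f (G.mul (G.mul (G.e a) f) (G.inv a))]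
    rw [← G.mul_assoc f (G.mul (G.e a) f) (G.inv a)]
    rw [← G.mul_assoc f (G.e a) f]
    have hs : G.mul (G.mul f (G.e a)) f = f := by
      rw [hfx]; exact sandwich G he x a
    rw [hs]
    exact (G.mul_assoc a f (G.inv a)).symm
  have her : G.e r = G.e a := by
    rw [hr, he (G.mul a f) (G.inv a), he a f, e_inv G he, hfx, e_e]
    exact sandwich G he a x
  rw [← her, e_of_idem G r hidem]

/-- contextual conjugation -/
lemma conj' (he : ∀ s t : T, G.e (G.mul s t) = G.mul (G.e s) (G.e t)) (a x z : T) :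
    G.mul a (G.mul (G.e x) (G.mul (G.inv a) z)) = G.mul (G.e a) z := by
  rw [← G.mul_assoc (G.e x) (G.inv a) z, ← G.mul_assoc a (G.mul (G.e x) (G.inv a)) z,
    ← G.mul_assoc a (G.e x) (G.inv a), conj G he a x]

end GenGroupAux

open GenGroupAux in
theorem inv_mul_formula {T : Type u} (G : GenGroup T)
    (he : ∀ s t : T, G.e (G.mul s t) = G.mul (G.e s) (G.e t)) (s t : T) :
    G.inv (G.mul s t) =
      G.mul (G.mul (G.mul (G.e s) (G.inv t)) (G.inv s)) (G.e t) := by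
  set X := G.mul (G.mul (G.mul (G.e s) (G.inv t)) (G.inv s)) (G.e t) with hXdef
  have heX : G.e X = G.e (G.mul s t) := by
    rw [hXdef, he (G.mul (G.mul (G.e s) (G.inv t)) (G.inv s)) (G.e t),
      he (G.mul (G.e s) (G.inv t)) (G.inv s), he (G.e s) (G.inv t),
      e_e, e_inv G he, e_inv G he, e_e, sandwich G he s t, he s t]
  have hX : G.mul (G.mul s t) X = G.e (G.mul s t) := by
    rw [hXdef]
    rw [G.mul_assoc (G.mul (G.e s) (G.inv t)) (G.inv s) (G.e t),
      G.mul_assoc (G.e s) (G.inv t) (G.mul (G.inv s) (G.e t)),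
      G.mul_assoc s t (G.mul (G.e s) (G.mul (G.inv t) (G.mul (G.inv s) (G.e t))))]
    rw [conj' G he t s (G.mul (G.inv s) (G.e t))]
    rw [conj' G he s t (G.e t)]
    rw [he s t]
  calc G.inv (G.mul s t)
      = G.mul (G.inv (G.mul s t)) (G.e (G.mul s t)) := (inv_e G he _).symm
    _ = G.mul (G.inv (G.mul s t)) (G.mul (G.mul s t) X) := by rw [hX]
    _ = G.mul (G.mul (G.inv (G.mul s t)) (G.mul s t)) X := (G.mul_assoc _ _ _).symm
    _ = G.mul (G.e (G.mul s t)) X := by rw [G.inv_mul]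
    _ = G.mul (G.e X) X := by rw [heX]
    _ = X := G.e_mul X
end

section
/- Let (X, T, λ) be a T-space with T compact and λ perfect (e(t)·x = x for all t, x). Then λ : T × X → X is a closed map. -/
universe u v

structure GenAction {T : Type u} (G : GenGroup T) (X : Type v) where
  act : T → X → X
  act_mul : ∀ s t x, act s (act t x) = act (G.mul s t) x
  act_e : ∀ x : X, ∃ t : T, act (G.e t) x = x

theorem action_closed_map {T : Type u} {X : Type v}
    [TopologicalSpace T] [T2Space T] [CompactSpace T]
    [TopologicalSpace X] [T2Space X]
    (G : GenGroup T)
    (hmul : Continuous fun p : T × T => G.mul p.1 p.2)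
    (hinv : Continuous G.inv)
    (he : ∀ s t : T, G.e (G.mul s t) = G.mul (G.e s) (G.e t))
    (A : GenAction G X)
    (hact : Continuous fun p : T × X => A.act p.1 p.2)
    (hperf : ∀ (t : T) (x : X), A.act (G.e t) x = x) :
    IsClosedMap fun p : T × X => A.act p.1 p.2 := by
  let Φ : T × X ≃ₜ T × X :=
    { toFun := fun p => (p.1, A.act p.1 p.2)
      invFun := fun p => (p.1, A.act (G.inv p.1) p.2)
      left_inv := fun p => by
        simp only [A.act_mul, G.inv_mul, hperf]
      right_inv := fun p => by
        simp only [A.act_mul, G.mul_inv, hperf]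
      continuous_toFun := continuous_fst.prodMk hact
      continuous_invFun := continuous_fst.prodMk
        (hact.comp ((hinv.comp continuous_fst).prodMk continuous_snd)) }
  have : (fun p : T × X => A.act p.1 p.2) = Prod.snd ∘ Φ := rfl
  rw [this]
  exact isClosedMap_snd_of_compactSpace.comp Φ.isClosedMap
end

section
/- Let (X, T, λ) be a T-space with T compact and λ perfect. Then the quotient space X/T (orbits of the action, with quotient topology) is Hausdorff. -/
universe u v

theorem quotient_t2 {T : Type u} {X : Type v}
    [TopologicalSpace T] [T2Space T] [CompactSpace T]
    [TopologicalSpace X] [T2Space X]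
    (G : GenGroup T)
    (hmul : Continuous fun p : T × T => G.mul p.1 p.2)
    (hinv : Continuous G.inv)
    (he : ∀ s t : T, G.e (G.mul s t) = G.mul (G.e s) (G.e t))
    (A : GenAction G X)
    (hact : Continuous fun p : T × X => A.act p.1 p.2)
    (hperf : ∀ (t : T) (x : X), A.act (G.e t) x = x) :
    T2Space (Quot fun x y : X => ∃ t : T, A.act t x = y) := by
  set R := fun x y : X => ∃ t : T, A.act t x = y with hR
  -- R is an equivalence relation
  have hequiv : Equivalence R := by
    constructor
    · intro x
      obtain ⟨t, ht⟩ := A.act_e x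
      exact ⟨G.e t, ht⟩
    · rintro x y ⟨t, rfl⟩
      exact ⟨G.inv t, by rw [A.act_mul, G.inv_mul, hperf]⟩
    · rintro x y z ⟨s, rfl⟩ ⟨t, rfl⟩
      exact ⟨G.mul t s, by rw [A.act_mul]⟩
  have hconts : ∀ t : T, Continuous (A.act t) := fun t =>
    hact.comp (continuous_const.prodMk continuous_id)
  set π : X → Quot R := Quot.mk R with hπ
  have hπeq : ∀ x y : X, π x = π y ↔ R x y := by
    intro x y
    constructor
    · intro h
      exact hequiv.eqvGen_iff.mp (Quot.eq.mp h)
    · intro h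
      exact Quot.sound h
  -- π is an open quotient map
  have hopen : IsOpenMap π := by
    intro U hU
    rw [isOpen_coinduced (f := π)]
    have : π ⁻¹' (π '' U) = ⋃ t : T, A.act t ⁻¹' U := by
      ext y
      simp only [Set.mem_preimage, Set.mem_image, Set.mem_iUnion]
      constructor
      · rintro ⟨x, hxU, hxy⟩
        obtain ⟨t, ht⟩ := (hπeq y x).mp hxy.symm
        exact ⟨t, ht ▸ hxU⟩
      · rintro ⟨t, ht⟩
        exact ⟨A.act t y, ht, ((hπeq y _).mpr ⟨t, rfl⟩).symm⟩
    rw [this]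
    exact isOpen_iUnion fun t => (hconts t).isOpen_preimage U hU
  have hoq : IsOpenQuotientMap π :=
    ⟨Quot.exists_rep, continuous_quot_mk, hopen⟩
  -- the graph of R is closed
  have hclosed : IsClosed {p : X × X | R p.1 p.2} := by
    have hC : IsClosed {q : T × (X × X) | A.act q.1 q.2.1 = q.2.2} := by
      have : {q : T × (X × X) | A.act q.1 q.2.1 = q.2.2} =
          (fun q : T × (X × X) => (A.act q.1 q.2.1, q.2.2)) ⁻¹' Set.diagonal X := by
        ext q; simp [Set.diagonal, eq_comm]
      rw [this]
      exact IsClosed.preimage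
        ((hact.comp (continuous_fst.prodMk (continuous_fst.comp continuous_snd))).prodMk
          (continuous_snd.comp continuous_snd)) (isClosed_diagonal)
    have himg : {p : X × X | R p.1 p.2} =
        Prod.snd '' {q : T × (X × X) | A.act q.1 q.2.1 = q.2.2} := by
      ext ⟨x, y⟩
      simp only [Set.mem_setOf_eq, Set.mem_image]
      constructor
      · rintro ⟨t, ht⟩; exact ⟨(t, (x, y)), ht, rfl⟩
      · rintro ⟨⟨t, a, b⟩, hab, h⟩
        cases h
        exact ⟨t, hab⟩
    rw [himg]
    exact isClosedMap_snd_of_compactSpace _ hC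
  -- conclude
  rw [t2_iff_isClosed_diagonal]
  have hmap : IsOpenQuotientMap (Prod.map π π) := hoq.prodMap hoq
  rw [← hmap.isQuotientMap.isClosed_preimage]
  have : Prod.map π π ⁻¹' Set.diagonal (Quot R) = {p : X × X | R p.1 p.2} := by
    ext ⟨x, y⟩
    simp only [Set.mem_preimage, Prod.map_apply, Set.mem_diagonal_iff, Set.mem_setOf_eq]
    exact hπeq x y
  rw [this]
  exact hclosed
end

section
/- Let (X, T, λ) be a T-space with T compact and λ perfect. Then X is compact if and only if X/T is compact, and X is locally compact if and only if X/T is locally compact. -/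
universe u v

theorem quotient_compactness {T : Type u} {X : Type v}
    [TopologicalSpace T] [T2Space T] [CompactSpace T]
    [TopologicalSpace X] [T2Space X]
    (G : GenGroup T)
    (hmul : Continuous fun p : T × T => G.mul p.1 p.2)
    (hinv : Continuous G.inv)
    (he : ∀ s t : T, G.e (G.mul s t) = G.mul (G.e s) (G.e t))
    (A : GenAction G X)
    (hact : Continuous fun p : T × X => A.act p.1 p.2)
    (hperf : ∀ (t : T) (x : X), A.act (G.e t) x = x) :
    (CompactSpace X ↔ CompactSpace (Quot fun x y : X => ∃ t : T, A.act t x = y)) ∧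
    (LocallyCompactSpace X ↔
      LocallyCompactSpace (Quot fun x y : X => ∃ t : T, A.act t x = y)) := by
  set r := fun x y : X => ∃ t : T, A.act t x = y with hr
  have hrefl : ∀ x, r x x := fun x => by
    obtain ⟨t, ht⟩ := A.act_e x
    exact ⟨G.e t, ht⟩
  have hsymm : ∀ {x y}, r x y → r y x := by
    rintro x y ⟨t, rfl⟩
    exact ⟨G.inv t, by rw [A.act_mul, G.inv_mul, hperf]⟩
  have htrans : ∀ {x y z}, r x y → r y z → r x z := by
    rintro x y z ⟨s, rfl⟩ ⟨t, rfl⟩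
    exact ⟨G.mul t s, (A.act_mul t s x).symm⟩
  have hequiv : Equivalence r := ⟨hrefl, hsymm, htrans⟩
  set q : X → Quot r := Quot.mk r with hq
  have hcont : Continuous q := continuous_quot_mk
  have hsurj : Function.Surjective q := Quot.exists_rep
  have hmkeq : ∀ x y : X, q x = q y ↔ r x y := fun x y => by
    rw [hq, Quot.eq, Equivalence.eqvGen_iff hequiv]
  -- saturation of a set
  have hsat : ∀ S : Set X, q ⁻¹' (q '' S) = {x | ∃ t, A.act t x ∈ S} := by
    intro S
    ext x
    simp only [Set.mem_preimage, Set.mem_image, Set.mem_setOf_eq]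
    constructor
    · rintro ⟨c, hc, hqc⟩
      obtain ⟨t, ht⟩ := (hmkeq x c).1 hqc.symm
      exact ⟨t, ht ▸ hc⟩
    · rintro ⟨t, ht⟩
      exact ⟨A.act t x, ht, ((hmkeq x (A.act t x)).2 ⟨t, rfl⟩).symm⟩
  have hopenmap : IsOpenMap q := by
    intro U hU
    rw [isOpen_coinduced]
    show IsOpen (q ⁻¹' (q '' U))
    rw [hsat]
    have : {x | ∃ t, A.act t x ∈ U} = ⋃ t : T, (fun x => A.act t x) ⁻¹' U := by
      ext x; simp
    rw [this]
    exact isOpen_iUnion fun t =>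
      (hact.comp (continuous_const.prodMk continuous_id)).isOpen_preimage U hU
  have hclosedmap : IsClosedMap q := by
    intro C hC
    rw [← isOpen_compl_iff, isOpen_coinduced, Set.preimage_compl, isOpen_compl_iff]
    show IsClosed (q ⁻¹' (q '' C))
    rw [hsat]
    have : {x | ∃ t, A.act t x ∈ C} =
        Prod.snd '' ((fun p : T × X => A.act p.1 p.2) ⁻¹' C) := by
      ext x
      simp only [Set.mem_setOf_eq, Set.mem_image, Set.mem_preimage, Prod.exists]
      exact ⟨fun ⟨t, ht⟩ => ⟨t, x, ht, rfl⟩, fun ⟨t, y, hy, hyx⟩ => ⟨t, by rwa [← hyx]⟩⟩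
    rw [this]
    exact isClosedMap_snd_of_compactSpace _ (hC.preimage hact)
  have hfiber : ∀ y : Quot r, IsCompact (q ⁻¹' {y}) := by
    intro y
    obtain ⟨x, rfl⟩ := hsurj y
    have : q ⁻¹' {q x} = (fun t : T => A.act t x) '' Set.univ := by
      ext z
      simp only [Set.mem_preimage, Set.mem_singleton_iff, Set.image_univ, Set.mem_range]
      rw [hmkeq]
      exact ⟨fun h => hsymm h, fun h => hsymm h⟩
    rw [this]
    exact isCompact_univ.image (hact.comp (continuous_id.prodMk continuous_const))
  have hproper : IsProperMap q :=
    isProperMap_iff_isClosedMap_and_compact_fibers.2 ⟨hcont, hclosedmap, hfiber⟩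
  constructor
  · constructor
    · intro hX
      exact ⟨hsurj.range_eq ▸ isCompact_range hcont⟩
    · intro hQ
      refine ⟨?_⟩
      have : (Set.univ : Set X) = q ⁻¹' Set.univ := by simp
      rw [this]
      exact hproper.isCompact_preimage isCompact_univ
  · constructor
    · intro hX
      refine ⟨fun y N hN => ?_⟩
      obtain ⟨x, rfl⟩ := hsurj y
      obtain ⟨K, hKmem, hKsub, hKcomp⟩ :=
        LocallyCompactSpace.local_compact_nhds x (q ⁻¹' N) (hcont.continuousAt.preimage_mem_nhds hN)
      exact ⟨q '' K, hopenmap.image_mem_nhds hKmem,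
        (Set.image_mono hKsub).trans (Set.image_preimage_subset q N), hKcomp.image hcont⟩
    · intro hQ
      haveI : WeaklyLocallyCompactSpace X := by
        refine ⟨fun x => ?_⟩
        obtain ⟨K, hKc, hKmem⟩ := exists_compact_mem_nhds (q x)
        exact ⟨q ⁻¹' K, hproper.isCompact_preimage hKc,
          hcont.continuousAt.preimage_mem_nhds hKmem⟩
      infer_instance
end
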